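/- Let $w$ be analytic in the open unit disc $\mathbb{D}$ with $w(0)=0$. If for some $z_0 \in \mathbb{D}$ one has $\max_{|z| \le |z_0|} |w(z)| = |w(z_0)|$ with $w(z_0) \ne 0$, then $z_0 w'(z_0)/w(z_0)$ is a real number and $z_0 w'(z_0)/w(z_0) \ge 1$. -/

import Mathlib

open Metric Filter Complex

/-- Jack's lemma. -/
theorem jack_lemma (w : ℂ → ℂ) (hw : AnalyticOn ℂ w (ball (0:ℂ) 1))
    (h0 : w 0 = 0) (z₀ : ℂ) (hz₀ : z₀ ∈ ball (0:ℂ) 1)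
    (hmax : ∀ z ∈ closedBall (0:ℂ) ‖z₀‖, ‖w z‖ ≤ ‖w z₀‖)
    (hne : w z₀ ≠ 0) :
    (z₀ * deriv w z₀ / w z₀).im = 0 ∧ 1 ≤ (z₀ * deriv w z₀ / w z₀).re := by
  set W : ℂ := w z₀ with hWdef
  set M : ℝ := ‖W‖ with hMdef
  have hM : 0 < M := norm_pos_iff.mpr hne
  have hr1 : ‖z₀‖ < 1 := by simpa [mem_ball, dist_eq_norm] using hz₀
  set F : ℂ → ℂ := fun l => w (l * z₀) with hFdef
  have hmem : ∀ ⦃l : ℂ⦄, l ∈ ball (0:ℂ) 1 → l * z₀ ∈ ball (0:ℂ) 1 := by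
    intro l hl
    rw [mem_ball_zero_iff] at hl ⊢
    calc ‖l * z₀‖ = ‖l‖ * ‖z₀‖ := norm_mul _ _
      _ ≤ 1 * ‖z₀‖ := by nlinarith [norm_nonneg z₀]
      _ < 1 := by simpa using hr1
  have hdw : DifferentiableOn ℂ w (ball (0:ℂ) 1) := by
    intro z hz
    exact ((hw z hz).differentiableWithinAt).mono (Set.subset_insert _ _)
  have hdAt : ∀ z ∈ ball (0:ℂ) 1, DifferentiableAt ℂ w z := fun z hz =>
    hdw.differentiableAt (isOpen_ball.mem_nhds hz)
  have hF0 : F 0 = 0 := by simp [hFdef, h0]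
  have hdF : DifferentiableOn ℂ F (ball (0:ℂ) 1) := by
    intro l hl
    exact (((hdAt _ (hmem hl)).comp l
      ((differentiableAt_id.mul_const z₀)))).differentiableWithinAt
  -- Schwarz-type bound
  have hS : ∀ ⦃l : ℂ⦄, l ∈ ball (0:ℂ) 1 → ‖F l‖ ≤ M * ‖l‖ := by
    intro l hl
    have hl1 : ‖l‖ < 1 := mem_ball_zero_iff.mp hl
    refine le_of_forall_pos_le_add ?_
    intro ε hε
    have maps : Set.MapsTo F (ball (0:ℂ) 1) (ball (F 0) (M + ε)) := by
      intro x hx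
      rw [hF0, mem_ball_zero_iff]
      have hx1 : ‖x‖ < 1 := mem_ball_zero_iff.mp hx
      have hxz : x * z₀ ∈ closedBall (0:ℂ) ‖z₀‖ := by
        rw [mem_closedBall_zero_iff, norm_mul]
        nlinarith [norm_nonneg z₀]
      calc ‖w (x * z₀)‖ ≤ M := hmax _ hxz
        _ < M + ε := by linarith
    have := Complex.dist_le_div_mul_dist_of_mapsTo_ball hdF (maps.mono_right ball_subset_closedBall) hl
    rw [hF0, dist_zero_right, dist_zero_right, div_one] at this
    calc ‖F l‖ ≤ (M + ε) * ‖l‖ := this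
      _ = M * ‖l‖ + ε * ‖l‖ := by ring
      _ ≤ M * ‖l‖ + ε := by nlinarith [norm_nonneg l]
  -- derivative of F at 1
  have hF1 : F 1 = W := by simp [hFdef, hWdef]
  set c : ℂ := deriv w z₀ * z₀ with hcdef
  have hderiv : HasDerivAt F c 1 := by
    have h1 : HasDerivAt w (deriv w z₀) z₀ := (hdAt z₀ hz₀).hasDerivAt
    have h2 : HasDerivAt (fun l : ℂ => l * z₀) z₀ 1 := by
      simpa using (hasDerivAt_id (1:ℂ)).mul_const z₀
    have h1' : HasDerivAt w (deriv w z₀) ((fun l : ℂ => l * z₀) 1) := by simpa using h1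
    exact h1'.comp 1 h2
  set a : ℂ := z₀ * deriv w z₀ / W with hadef
  have hca : c = a * W := by
    rw [hcdef, hadef, div_mul_cancel₀ _ hne]
    ring
  -- key inequality
  have key : ∀ t : ℝ, 1 ≤ a.re + t * a.im := by
    intro t
    set u : ℂ := t * I - 1 with hudef
    have hu : u ≠ 0 := by
      intro h
      have : u.re = 0 := by rw [h]; simp
      simp [hudef] at this
    have hnormsq : ∀ ε : ℝ, ‖(1 : ℂ) + ε * u‖ ^ 2 = (1 - ε) ^ 2 + (ε * t) ^ 2 := by
      intro ε
      rw [← Complex.normSq_eq_norm_sq, Complex.normSq_apply]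
      simp only [hudef, Complex.add_re, Complex.add_im, Complex.mul_re, Complex.mul_im,
        Complex.sub_re, Complex.sub_im, Complex.one_re, Complex.one_im, Complex.I_re,
        Complex.I_im, Complex.ofReal_re, Complex.ofReal_im]
      ring
    -- limit of difference quotients
    have hm_tendsto : Tendsto (fun ε : ℝ => (1 : ℂ) + ε * u) (nhdsWithin 0 (Set.Ioi 0))
        (nhdsWithin 1 {(1:ℂ)}ᶜ) := by
      apply tendsto_nhdsWithin_of_tendsto_nhds_of_eventually_within
      · have : Tendsto (fun ε : ℝ => (1 : ℂ) + ε * u) (nhds 0) (nhds 1) := by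
          have hc : Continuous fun ε : ℝ => (1 : ℂ) + ε * u := by fun_prop
          simpa using hc.tendsto 0
        exact this.mono_left nhdsWithin_le_nhds
      · filter_upwards [self_mem_nhdsWithin] with ε (hε : 0 < ε)
        simp only [Set.mem_compl_iff, Set.mem_singleton_iff]
        intro h
        have : (ε : ℂ) * u = 0 := by linear_combination h
        rcases mul_eq_zero.mp this with h' | h'
        · exact absurd (by exact_mod_cast h') hε.ne'
        · exact hu h'
    have hslope : Tendsto (slope F 1) (nhdsWithin 1 {(1:ℂ)}ᶜ) (nhds c) :=
      hasDerivAt_iff_tendsto_slope.mp hderiv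
    have hquot : Tendsto (fun ε : ℝ => (F (1 + ε * u) - W) / (ε : ℂ))
        (nhdsWithin 0 (Set.Ioi 0)) (nhds (c * u)) := by
      have h1 : Tendsto (fun ε : ℝ => slope F 1 (1 + ε * u) * u)
          (nhdsWithin 0 (Set.Ioi 0)) (nhds (c * u)) :=
        (hslope.comp hm_tendsto).mul_const u
      refine h1.congr' ?_
      filter_upwards [self_mem_nhdsWithin] with ε (hε : 0 < ε)
      have hεne : (ε : ℂ) ≠ 0 := by exact_mod_cast hε.ne'
      rw [slope_def_field, hF1]
      have : (1 : ℂ) + ε * u - 1 = ε * u := by ring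
      rw [this]
      field_simp
    have hre : Tendsto (fun ε : ℝ => ((starRingEnd ℂ) W * ((F (1 + ε * u) - W) / (ε : ℂ))).re)
        (nhdsWithin 0 (Set.Ioi 0)) (nhds (((starRingEnd ℂ) W * (c * u)).re)) := by
      have : Continuous fun z : ℂ => ((starRingEnd ℂ) W * z).re :=
        Complex.continuous_re.comp (continuous_const.mul continuous_id)
      exact (this.tendsto _).comp hquot
    set g : ℝ → ℝ := fun ε => M ^ 2 * (-1 + ε * (1 + t ^ 2) / 2) with hgdef
    have hg : Tendsto g (nhdsWithin 0 (Set.Ioi 0)) (nhds (-(M ^ 2))) := by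
      have : Tendsto g (nhds 0) (nhds (g 0)) := (by fun_prop : Continuous g).tendsto 0
      have h0g : g 0 = -(M ^ 2) := by simp [hgdef]
      rw [h0g] at this
      exact this.mono_left nhdsWithin_le_nhds
    have hδ : (0:ℝ) < 2 / (1 + t ^ 2) := by positivity
    have hle : ∀ᶠ (ε : ℝ) in nhdsWithin (0:ℝ) (Set.Ioi 0),
        ((starRingEnd ℂ) W * ((F (1 + ε * u) - W) / (ε : ℂ))).re ≤ g ε := by
      filter_upwards [Ioo_mem_nhdsGT hδ] with ε hε
      obtain ⟨hε0, hεδ⟩ := hε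
      have hεt : ε * (1 + t ^ 2) < 2 := (lt_div_iff₀ (by positivity)).mp hεδ
      have hball : (1 : ℂ) + ε * u ∈ ball (0:ℂ) 1 := by
        rw [mem_ball_zero_iff]
        have h2 : ‖(1 : ℂ) + ε * u‖ ^ 2 < 1 := by
          rw [hnormsq]; nlinarith
        nlinarith [norm_nonneg ((1 : ℂ) + ε * u)]
      have hFb : ‖F (1 + ε * u)‖ ≤ M * ‖(1:ℂ) + ε * u‖ := hS hball
      have hnle : ‖(1 : ℂ) + ε * u‖ - 1 ≤ -ε + ε ^ 2 * (1 + t ^ 2) / 2 := by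
        nlinarith [hnormsq ε, norm_nonneg ((1 : ℂ) + ε * u),
          sq_nonneg (‖(1 : ℂ) + ε * u‖ - 1)]
      -- numerator bound
      have hnum : ((starRingEnd ℂ) W * (F (1 + ε * u) - W)).re ≤ M ^ 2 * (‖(1:ℂ) + ε * u‖ - 1) := by
        have e1 : ((starRingEnd ℂ) W * (F (1 + ε * u) - W)).re
            = ((starRingEnd ℂ) W * F (1 + ε * u)).re - M ^ 2 := by
          have : (starRingEnd ℂ) W * (F (1 + ε * u) - W)
              = (starRingEnd ℂ) W * F (1 + ε * u) - (starRingEnd ℂ) W * W := by ring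
          rw [this]
          have : ((starRingEnd ℂ) W * W) = ((Complex.normSq W : ℝ) : ℂ) := by
            rw [mul_comm]; exact Complex.mul_conj W
          rw [Complex.sub_re, this]
          simp only [Complex.ofReal_re, Complex.normSq_eq_norm_sq, hMdef]
        have e2 : ((starRingEnd ℂ) W * F (1 + ε * u)).re ≤ M * ‖F (1 + ε * u)‖ := by
          calc ((starRingEnd ℂ) W * F (1 + ε * u)).re
              ≤ ‖(starRingEnd ℂ) W * F (1 + ε * u)‖ := Complex.re_le_norm _
            _ = M * ‖F (1 + ε * u)‖ := by
                simp [hMdef]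
        have e3 : M * ‖F (1 + ε * u)‖ ≤ M ^ 2 * ‖(1:ℂ) + ε * u‖ := by
          nlinarith
        rw [e1]
        nlinarith
      -- divide by ε
      have hdiv : ((starRingEnd ℂ) W * ((F (1 + ε * u) - W) / (ε : ℂ))).re
          = ((starRingEnd ℂ) W * (F (1 + ε * u) - W)).re / ε := by
        rw [mul_div_assoc']
        exact Complex.div_ofReal_re _ _
      rw [hdiv]
      rw [div_le_iff₀ hε0]
      calc ((starRingEnd ℂ) W * (F (1 + ε * u) - W)).re
          ≤ M ^ 2 * (‖(1:ℂ) + ε * u‖ - 1) := hnum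
        _ ≤ M ^ 2 * (-ε + ε ^ 2 * (1 + t ^ 2) / 2) := by nlinarith
        _ = g ε * ε := by rw [hgdef]; ring
    have hfinal : (((starRingEnd ℂ) W * (c * u)).re) ≤ -(M ^ 2) :=
      le_of_tendsto_of_tendsto hre hg hle
    -- unfold
    have hconj : (starRingEnd ℂ) W * (c * u) = ((Complex.normSq W : ℝ) : ℂ) * (a * u) := by
      rw [hca]
      have : (starRingEnd ℂ) W * (a * W * u) = ((starRingEnd ℂ) W * W) * (a * u) := by ring
      rw [this, mul_comm ((starRingEnd ℂ) W) W, Complex.mul_conj]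
    rw [hconj] at hfinal
    have hre' : (((Complex.normSq W : ℝ) : ℂ) * (a * u)).re = M ^ 2 * (a * u).re := by
      rw [Complex.re_ofReal_mul]
      congr 1
      simp [Complex.normSq_eq_norm_sq, hMdef]
    rw [hre'] at hfinal
    have hau : (a * u).re = -a.re - t * a.im := by
      simp [hudef, Complex.mul_re, Complex.sub_re, Complex.sub_im, Complex.mul_im]
      ring
    rw [hau] at hfinal
    have hM2 : 0 < M ^ 2 := by positivity
    nlinarith
  constructor
  · by_contra him
    rcases lt_or_gt_of_ne him with h | h
    · have := key ((1 - a.re - 1) / a.im)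
      rw [div_mul_cancel₀] at this
      · linarith
      · exact him
    · have := key ((1 - a.re - 1) / a.im)
      rw [div_mul_cancel₀] at this
      · linarith
      · exact him
  · have := key 0
    simpa using this
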